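/- Let (Ω, F, μ) be a probability space, Q : Ω → (0,∞) a measurable map, and h : Ω × [0,∞) → [0,∞) a jointly measurable map such that for μ-a.e. ω: h(ω,·) is convex and non-decreasing, h(ω,0) = 0, and the right derivative satisfies 0 ≤ D⁺h(ω,r) ≤ 1 for all r ≥ 0. Define W(q) := ∫_Ω h(ω, q·Q(ω))/Q(ω) μ(dω) for q ≥ 0. Then W is finite (indeed 0 ≤ W(q) ≤ q), convex and non-decreasing, with W(0) = 0, and: D⁺W(q) = ∫_Ω D⁺h(ω, q·Q(ω)) μ(dω) for every q ≥ 0, and D⁻W(q) = ∫_Ω D⁻h(ω, q·Q(ω)) μ(dω) for every q > 0, where D⁻h(ω,·) denotes the left derivative of h(ω,·) on (0,∞). Moreover, if for μ-a.e. ω one has lim_{r→∞} D⁺h(ω,r) = 1, then lim_{q→∞} D⁺W(q) = 1. -/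

import Mathlib

open MeasureTheory
noncomputable section

/-- Right derivative of `g : ℝ → ℝ` at `r`: the infimum of the right slopes
`(g (r+h) - g r)/h` over `h > 0`. -/
def rightD (g : ℝ → ℝ) (r : ℝ) : ℝ :=
  sInf ((fun h : ℝ => (g (r + h) - g r) / h) '' Set.Ioi (0 : ℝ))

/-- Left derivative (within `[0,∞)`) of `g : ℝ → ℝ` at `r > 0`: the supremum of the
left slopes `(g r - g (r-h))/h` over `0 < h ≤ r`. -/
def leftD (g : ℝ → ℝ) (r : ℝ) : ℝ :=
  sSup ((fun h : ℝ => (g r - g (r - h)) / h) '' Set.Ioc (0 : ℝ) r)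

namespace DUIC

open Set Filter


variable {g : ℝ → ℝ} {r : ℝ}

/-- right slope -/
def rs (g : ℝ → ℝ) (r t : ℝ) : ℝ := (g (r + t) - g r) / t

/-- left slope -/
def ls (g : ℝ → ℝ) (r t : ℝ) : ℝ := (g r - g (r - t)) / t

lemma rightD_eq (g : ℝ → ℝ) (r : ℝ) : rightD g r = sInf (rs g r '' Ioi 0) := rfl

lemma leftD_eq (g : ℝ → ℝ) (r : ℝ) : leftD g r = sSup (ls g r '' Ioc 0 r) := rfl

lemma rs_nonneg (hm : MonotoneOn g (Ici 0)) (hr : 0 ≤ r) {t : ℝ} (ht : 0 < t) :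
    0 ≤ rs g r t :=
  div_nonneg (sub_nonneg.2 (hm hr (by simp only [mem_Ici]; linarith) (by linarith))) ht.le

lemma ls_nonneg (hm : MonotoneOn g (Ici 0)) {t : ℝ} (ht : 0 < t) (htr : t ≤ r) :
    0 ≤ ls g r t :=
  div_nonneg (sub_nonneg.2 (hm (by simp only [mem_Ici]; linarith)
    (by simp only [mem_Ici]; linarith) (by linarith))) ht.le

lemma rs_mono (hg : ConvexOn ℝ (Ici 0) g) (hr : 0 ≤ r) :
    MonotoneOn (rs g r) (Ioi 0) := by
  intro a ha b hb hab
  simp only [mem_Ioi] at ha hb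
  have := hg.secant_mono (a := r) (x := r + a) (y := r + b)
    (by simp only [mem_Ici]; linarith) (by simp only [mem_Ici]; linarith)
    (by simp only [mem_Ici]; linarith) (by intro hc; nlinarith) (by intro hc; nlinarith)
    (by linarith)
  simpa only [rs, add_sub_cancel_left] using this

lemma bddBelow_rs (hm : MonotoneOn g (Ici 0)) (hr : 0 ≤ r) :
    BddBelow (rs g r '' Ioi 0) := by
  refine ⟨0, fun x hx => ?_⟩
  obtain ⟨t, ht, rfl⟩ := hx
  exact rs_nonneg hm hr ht

lemma rightD_le_rs (hm : MonotoneOn g (Ici 0)) (hr : 0 ≤ r) {t : ℝ} (ht : 0 < t) :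
    rightD g r ≤ rs g r t :=
  csInf_le (bddBelow_rs hm hr) ⟨t, ht, rfl⟩

lemma rightD_nonneg' (hm : MonotoneOn g (Ici 0)) (hr : 0 ≤ r) : 0 ≤ rightD g r :=
  le_csInf ⟨rs g r 1, ⟨1, by norm_num, rfl⟩⟩ (by rintro b ⟨t, ht, rfl⟩; exact rs_nonneg hm hr ht)

lemma tendsto_rs (hg : ConvexOn ℝ (Ici 0) g) (hm : MonotoneOn g (Ici 0)) (hr : 0 ≤ r) :
    Tendsto (rs g r) (nhdsWithin 0 (Ioi 0)) (nhds (rightD g r)) :=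
  MonotoneOn.tendsto_nhdsGT (rs_mono hg hr) (bddBelow_rs hm hr)

/-- slope from the left is at most any slope to the right -/
lemma ls_le_rs (hg : ConvexOn ℝ (Ici 0) g) {t s : ℝ} (ht : 0 < t) (htr : t ≤ r)
    (hs : 0 < s) : ls g r t ≤ rs g r s := by
  have := hg.slope_mono_adjacent (x := r - t) (y := r) (z := r + s)
    (by simp only [mem_Ici]; linarith) (by simp only [mem_Ici]; linarith)
    (by linarith) (by linarith)
  simp only [ls, rs]
  have h1 : r - (r - t) = t := by ring
  have h2 : r + s - r = s := by ring
  rw [h1, h2] at this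
  exact this

lemma ls_le_rightD (hg : ConvexOn ℝ (Ici 0) g) (hm : MonotoneOn g (Ici 0))
    {t : ℝ} (ht : 0 < t) (htr : t ≤ r) : ls g r t ≤ rightD g r :=
  le_csInf ⟨rs g r 1, ⟨1, by norm_num, rfl⟩⟩
    (by rintro b ⟨s, hs, rfl⟩; exact ls_le_rs hg ht htr hs)

lemma bddAbove_ls (hg : ConvexOn ℝ (Ici 0) g) (hm : MonotoneOn g (Ici 0)) :
    BddAbove (ls g r '' Ioc 0 r) := by
  refine ⟨rightD g r, fun x hx => ?_⟩
  obtain ⟨t, ht, rfl⟩ := hx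
  exact ls_le_rightD hg hm ht.1 ht.2

lemma ls_anti (hg : ConvexOn ℝ (Ici 0) g) (hr : 0 ≤ r) :
    AntitoneOn (ls g r) (Ioc 0 r) := by
  intro a ha b hb hab
  simp only [mem_Ioc] at ha hb
  rcases eq_or_lt_of_le hab with rfl | hab
  · exact le_rfl
  have := hg.secant_mono (a := r) (x := r - b) (y := r - a)
    (by simp only [mem_Ici]; linarith) (by simp only [mem_Ici]; linarith)
    (by simp only [mem_Ici]; linarith) (by intro hc; nlinarith) (by intro hc; nlinarith)
    (by linarith)
  have hb' : r - b - r = -b := by ring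
  have ha' : r - a - r = -a := by ring
  rw [hb', ha'] at this
  simp only [ls]
  rw [div_neg, div_neg] at this
  have h3 : (g r - g (r - b)) / b = -((g (r - b) - g r) / b) := by ring
  have h4 : (g r - g (r - a)) / a = -((g (r - a) - g r) / a) := by ring
  rw [h3, h4]
  exact this

lemma ls_le_rightD_of_mem : True := trivial

lemma leftD_le_rightD (hg : ConvexOn ℝ (Ici 0) g) (hm : MonotoneOn g (Ici 0)) (hr : 0 < r) :
    leftD g r ≤ rightD g r :=
  csSup_le ⟨ls g r r, ⟨r, ⟨hr, le_rfl⟩, rfl⟩⟩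
    (by rintro b ⟨t, ht, rfl⟩; exact ls_le_rightD hg hm ht.1 ht.2)

lemma leftD_nonneg (hg : ConvexOn ℝ (Ici 0) g) (hm : MonotoneOn g (Ici 0)) (hr : 0 < r) :
    0 ≤ leftD g r :=
  le_trans (ls_nonneg hm hr le_rfl) (le_csSup (bddAbove_ls hg hm) ⟨r, ⟨hr, le_rfl⟩, rfl⟩)

lemma ls_le_leftD (hg : ConvexOn ℝ (Ici 0) g) (hm : MonotoneOn g (Ici 0))
    {t : ℝ} (ht : 0 < t) (htr : t ≤ r) : ls g r t ≤ leftD g r :=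
  le_csSup (bddAbove_ls hg hm) ⟨t, ⟨ht, htr⟩, rfl⟩

lemma tendsto_ls (hg : ConvexOn ℝ (Ici 0) g) (hm : MonotoneOn g (Ici 0)) (hr : 0 < r) :
    Tendsto (ls g r) (nhdsWithin 0 (Ioi 0)) (nhds (leftD g r)) := by
  have hne : (Ioo (0:ℝ) r).Nonempty := nonempty_Ioo.2 hr
  have hbdd : BddAbove (ls g r '' Ioo 0 r) :=
    (bddAbove_ls hg hm).mono (image_mono Ioo_subset_Ioc_self)
  have ht := AntitoneOn.tendsto_nhdsWithin_Ioo_right hne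
    ((ls_anti hg hr.le).mono Ioo_subset_Ioc_self) hbdd
  have hEq : sSup (ls g r '' Ioo 0 r) = leftD g r := by
    apply le_antisymm
    · exact csSup_le (hne.image _)
        (by rintro b ⟨t, ht', rfl⟩; exact ls_le_leftD hg hm ht'.1 ht'.2.le)
    · refine csSup_le ⟨ls g r r, ⟨r, ⟨hr, le_rfl⟩, rfl⟩⟩ ?_
      rintro b ⟨t, ht', rfl⟩
      rcases lt_or_eq_of_le ht'.2 with h | h
      · exact le_csSup hbdd ⟨t, ⟨ht'.1, h⟩, rfl⟩
      · subst h
        have ht0 : 0 < t := ht'.1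
        calc ls g t t ≤ ls g t (t/2) :=
              ls_anti hg ht0.le ⟨by linarith, by linarith⟩ ⟨ht0, le_rfl⟩ (by linarith)
          _ ≤ _ := le_csSup hbdd ⟨t/2, ⟨by linarith, by linarith⟩, rfl⟩
  rwa [hEq] at ht

/-- 1-Lipschitz bound from right derivative ≤ 1 -/
lemma lip (hg : ConvexOn ℝ (Ici 0) g) (hm : MonotoneOn g (Ici 0))
    (hD1 : ∀ r : ℝ, 0 ≤ r → rightD g r ≤ 1)
    {a b : ℝ} (ha : 0 ≤ a) (hab : a ≤ b) : g b - g a ≤ b - a := by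
  rcases eq_or_lt_of_le hab with rfl | hab
  · simp
  have hb : (0:ℝ) ≤ b := le_trans ha hab.le
  have key : (g b - g a) / (b - a) ≤ rightD g b := by
    refine le_csInf ⟨rs g b 1, ⟨1, by norm_num, rfl⟩⟩ ?_
    rintro x ⟨s, (hs : 0 < s), rfl⟩
    have := hg.slope_mono_adjacent (x := a) (y := b) (z := b + s)
      (by simpa using ha) (by simp only [mem_Ici]; linarith) hab (by linarith)
    simpa only [rs, add_sub_cancel_left] using this
  have h1 : (g b - g a) / (b - a) ≤ 1 := key.trans (hD1 b hb)
  have h2 : (0:ℝ) < b - a := by linarith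
  calc g b - g a = (g b - g a) / (b - a) * (b - a) := by field_simp
    _ ≤ 1 * (b - a) := by nlinarith
    _ = b - a := one_mul _

lemma rs_le_one (hg : ConvexOn ℝ (Ici 0) g) (hm : MonotoneOn g (Ici 0))
    (hD1 : ∀ r : ℝ, 0 ≤ r → rightD g r ≤ 1) (hr : 0 ≤ r) {t : ℝ} (ht : 0 < t) :
    rs g r t ≤ 1 := by
  have := lip hg hm hD1 hr (by linarith : r ≤ r + t)
  rw [rs, div_le_one ht]
  linarith

lemma ls_le_one (hg : ConvexOn ℝ (Ici 0) g) (hm : MonotoneOn g (Ici 0))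
    (hD1 : ∀ r : ℝ, 0 ≤ r → rightD g r ≤ 1) {t : ℝ} (ht : 0 < t) (htr : t ≤ r) :
    ls g r t ≤ 1 := by
  have := lip hg hm hD1 (by linarith : (0:ℝ) ≤ r - t) (by linarith : r - t ≤ r)
  rw [ls, div_le_one ht]
  linarith

lemma leftD_le_one (hg : ConvexOn ℝ (Ici 0) g) (hm : MonotoneOn g (Ici 0))
    (hD1 : ∀ r : ℝ, 0 ≤ r → rightD g r ≤ 1) (hr : 0 < r) : leftD g r ≤ 1 :=
  (leftD_le_rightD hg hm hr).trans (hD1 r hr.le)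

end DUIC

/-- **Analytic core of Lemma 3.2**: for `W(q) := ∫ h(ω, q·Q(ω))/Q(ω) dμ(ω)` with
`h(ω,·)` convex non-decreasing, vanishing at `0`, with right derivative in `[0,1]`,
the function `W` satisfies `0 ≤ W(q) ≤ q`, is convex and non-decreasing on `[0,∞)`,
`W 0 = 0`, its one-sided derivatives are obtained by differentiating under the
integral, and `D⁺W(q) → 1` as `q → ∞` provided `D⁺h(ω,·) → 1` a.e. -/


theorem deriv_under_integral_convex
    {Ω : Type*} {m0 : MeasurableSpace Ω} (μ : Measure Ω) [IsProbabilityMeasure μ]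
    (Q : Ω → ℝ) (hQmeas : Measurable Q) (hQpos : ∀ ω, 0 < Q ω)
    (h : Ω → ℝ → ℝ)
    (hmeas : Measurable fun p : Ω × ℝ => h p.1 p.2)
    (hnn : ∀ᵐ ω ∂μ, ∀ r : ℝ, 0 ≤ r → 0 ≤ h ω r)
    (hconv : ∀ᵐ ω ∂μ, ConvexOn ℝ (Set.Ici 0) (h ω))
    (hmono : ∀ᵐ ω ∂μ, MonotoneOn (h ω) (Set.Ici 0))
    (h0 : ∀ᵐ ω ∂μ, h ω 0 = 0)
    (hD : ∀ᵐ ω ∂μ, ∀ r : ℝ, 0 ≤ r → 0 ≤ rightD (h ω) r ∧ rightD (h ω) r ≤ 1) :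
    (∀ q : ℝ, 0 ≤ q →
      0 ≤ (∫ ω, h ω (q * Q ω) / Q ω ∂μ) ∧ (∫ ω, h ω (q * Q ω) / Q ω ∂μ) ≤ q) ∧
    ConvexOn ℝ (Set.Ici 0) (fun q : ℝ => ∫ ω, h ω (q * Q ω) / Q ω ∂μ) ∧
    MonotoneOn (fun q : ℝ => ∫ ω, h ω (q * Q ω) / Q ω ∂μ) (Set.Ici 0) ∧
    (∫ ω, h ω (0 * Q ω) / Q ω ∂μ) = 0 ∧
    (∀ q : ℝ, 0 ≤ q →
      rightD (fun q' : ℝ => ∫ ω, h ω (q' * Q ω) / Q ω ∂μ) q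
        = ∫ ω, rightD (h ω) (q * Q ω) ∂μ) ∧
    (∀ q : ℝ, 0 < q →
      leftD (fun q' : ℝ => ∫ ω, h ω (q' * Q ω) / Q ω ∂μ) q
        = ∫ ω, leftD (h ω) (q * Q ω) ∂μ) ∧
    ((∀ᵐ ω ∂μ, Filter.Tendsto (fun r : ℝ => rightD (h ω) r) Filter.atTop (nhds 1)) →
      Filter.Tendsto (fun q : ℝ => rightD (fun q' : ℝ => ∫ ω, h ω (q' * Q ω) / Q ω ∂μ) q)
        Filter.atTop (nhds 1)) := by
  classical
  set W : ℝ → ℝ := fun q => ∫ ω, h ω (q * Q ω) / Q ω ∂μ with hWdef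
  -- combined a.e. hypotheses
  have hAE : ∀ᵐ ω ∂μ, (∀ r : ℝ, 0 ≤ r → 0 ≤ h ω r) ∧ ConvexOn ℝ (Set.Ici 0) (h ω) ∧
      MonotoneOn (h ω) (Set.Ici 0) ∧ h ω 0 = 0 ∧
      (∀ r : ℝ, 0 ≤ r → 0 ≤ rightD (h ω) r ∧ rightD (h ω) r ≤ 1) := by
    filter_upwards [hnn, hconv, hmono, h0, hD] with ω a b c d e
    exact ⟨a, b, c, d, e⟩
  -- measurability of compositions
  have measf : ∀ (φ : Ω → ℝ), Measurable φ → Measurable (fun ω => h ω (φ ω)) := fun φ hφ =>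
    hmeas.comp (measurable_id.prodMk hφ)
  -- integrability of the basic integrand
  have intg : ∀ q : ℝ, 0 ≤ q → Integrable (fun ω => h ω (q * Q ω) / Q ω) μ := by
    intro q hq
    refine Integrable.mono' (integrable_const q)
      (((measf _ (measurable_const.mul hQmeas)).div hQmeas).aestronglyMeasurable) ?_
    filter_upwards [hAE] with ω ⟨hnn', hconv', hmono', h0', hD'⟩
    have hQ := hQpos ω
    have hr0 : (0:ℝ) ≤ q * Q ω := mul_nonneg hq hQ.le
    have h1 : 0 ≤ h ω (q * Q ω) := hnn' _ hr0
    have h2 : h ω (q * Q ω) ≤ q * Q ω := by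
      have := DUIC.lip hconv' hmono' (fun r hr => (hD' r hr).2) le_rfl hr0
      rw [h0'] at this; linarith
    rw [Real.norm_eq_abs, abs_of_nonneg (div_nonneg h1 hQ.le), div_le_iff₀ hQ]
    exact h2
  -- Part 1 : bounds
  have part1 : ∀ q : ℝ, 0 ≤ q → 0 ≤ W q ∧ W q ≤ q := by
    intro q hq
    constructor
    · apply integral_nonneg_of_ae
      filter_upwards [hAE] with ω ⟨hnn', hconv', hmono', h0', hD'⟩
      exact div_nonneg (hnn' _ (mul_nonneg hq (hQpos ω).le)) (hQpos ω).le
    · calc W q ≤ ∫ _, q ∂μ := by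
            apply integral_mono_ae (intg q hq) (integrable_const q)
            filter_upwards [hAE] with ω ⟨hnn', hconv', hmono', h0', hD'⟩
            have hQ := hQpos ω
            rw [div_le_iff₀ hQ]
            have := DUIC.lip hconv' hmono' (fun r hr => (hD' r hr).2) le_rfl
              (mul_nonneg hq hQ.le)
            rw [h0'] at this; linarith
        _ = q := by simp
  -- Part 3 : monotone
  have part3 : MonotoneOn W (Set.Ici 0) := by
    intro a ha b hb hab
    have ha' : (0:ℝ) ≤ a := ha
    have hb' : (0:ℝ) ≤ b := hb
    apply integral_mono_ae (intg a ha') (intg b hb')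
    filter_upwards [hAE] with ω ⟨hnn', hconv', hmono', h0', hD'⟩
    have hQ := hQpos ω
    exact (div_le_div_iff_of_pos_right hQ).2
      (hmono' (Set.mem_Ici.2 (mul_nonneg ha' hQ.le)) (Set.mem_Ici.2 (mul_nonneg hb' hQ.le))
        (mul_le_mul_of_nonneg_right hab hQ.le))
  -- Part 2 : convex
  have part2 : ConvexOn ℝ (Set.Ici 0) W := by
    refine ⟨convex_Ici 0, fun a ha b hb s t hs ht hst => ?_⟩
    have ha' : (0:ℝ) ≤ a := ha
    have hb' : (0:ℝ) ≤ b := hb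
    have hsab : (0:ℝ) ≤ s * a + t * b := by positivity
    have key : ∀ᵐ ω ∂μ, h ω ((s • a + t • b) * Q ω) / Q ω ≤
        s * (h ω (a * Q ω) / Q ω) + t * (h ω (b * Q ω) / Q ω) := by
      filter_upwards [hAE] with ω ⟨hnn', hconv', hmono', h0', hD'⟩
      have hQ := hQpos ω
      have hmem1 : a * Q ω ∈ Set.Ici (0:ℝ) := Set.mem_Ici.2 (mul_nonneg ha' hQ.le)
      have hmem2 : b * Q ω ∈ Set.Ici (0:ℝ) := Set.mem_Ici.2 (mul_nonneg hb' hQ.le)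
      have := hconv'.2 hmem1 hmem2 hs ht hst
      simp only [smul_eq_mul] at this ⊢
      have harg : (s * a + t * b) * Q ω = s * (a * Q ω) + t * (b * Q ω) := by ring
      rw [harg]
      rw [div_le_iff₀ hQ]
      have hexp : (s * (h ω (a * Q ω) / Q ω) + t * (h ω (b * Q ω) / Q ω)) * Q ω
          = s * h ω (a * Q ω) + t * h ω (b * Q ω) := by field_simp
      rw [hexp]
      exact this
    have hintc : Integrable (fun ω => s * (h ω (a * Q ω) / Q ω) + t * (h ω (b * Q ω) / Q ω)) μ :=
      ((intg a ha').const_mul s).add ((intg b hb').const_mul t)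
    calc W (s • a + t • b) ≤ ∫ ω, (s * (h ω (a * Q ω) / Q ω) + t * (h ω (b * Q ω) / Q ω)) ∂μ := by
          apply integral_mono_ae (intg _ (by simpa using hsab)) hintc
          exact key
      _ = s • W a + t • W b := by
          rw [integral_add ((intg a ha').const_mul s) ((intg b hb').const_mul t),
            integral_const_mul, integral_const_mul]
          simp [smul_eq_mul]
          rfl
  -- Part 4 : W 0 = 0
  have part4 : (∫ ω, h ω (0 * Q ω) / Q ω ∂μ) = 0 := by
    have : ∀ᵐ ω ∂μ, h ω (0 * Q ω) / Q ω = 0 := by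
      filter_upwards [h0] with ω h0'
      rw [zero_mul, h0', zero_div]
    exact integral_eq_zero_of_ae this
  -- slope identities
  have slopeWr : ∀ q t : ℝ, 0 ≤ q → 0 < t →
      (W (q + t) - W q) / t = ∫ ω, DUIC.rs (h ω) (q * Q ω) (t * Q ω) ∂μ := by
    intro q t hq ht
    rw [hWdef]
    simp only
    rw [← integral_sub (intg (q + t) (by linarith)) (intg q hq), ← integral_div]
    refine integral_congr_ae (Filter.Eventually.of_forall fun ω => ?_)
    have hQ := (hQpos ω).ne'
    simp only [DUIC.rs]
    have harg : q * Q ω + t * Q ω = (q + t) * Q ω := by ring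
    rw [harg, div_sub_div_same, div_div, mul_comm (Q ω) t]
  have slopeWl : ∀ q t : ℝ, 0 < t → t ≤ q →
      (W q - W (q - t)) / t = ∫ ω, DUIC.ls (h ω) (q * Q ω) (t * Q ω) ∂μ := by
    intro q t ht htq
    rw [hWdef]
    simp only
    rw [← integral_sub (intg q (by linarith)) (intg (q - t) (by linarith)), ← integral_div]
    refine integral_congr_ae (Filter.Eventually.of_forall fun ω => ?_)
    have hQ := (hQpos ω).ne'
    simp only [DUIC.ls]
    have harg : q * Q ω - t * Q ω = (q - t) * Q ω := by ring
    rw [harg, div_sub_div_same, div_div, mul_comm (Q ω) t]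
  -- measurability and integrability of slope integrands
  have rsmeas : ∀ q t : ℝ, Measurable (fun ω => DUIC.rs (h ω) (q * Q ω) (t * Q ω)) := by
    intro q t
    simp only [DUIC.rs]
    exact ((measf _ ((measurable_const.mul hQmeas).add (measurable_const.mul hQmeas))).sub
      (measf _ (measurable_const.mul hQmeas))).div (measurable_const.mul hQmeas)
  have lsmeas : ∀ q t : ℝ, Measurable (fun ω => DUIC.ls (h ω) (q * Q ω) (t * Q ω)) := by
    intro q t
    simp only [DUIC.ls]
    exact ((measf _ (measurable_const.mul hQmeas)).sub
      (measf _ ((measurable_const.mul hQmeas).sub (measurable_const.mul hQmeas)))).div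
      (measurable_const.mul hQmeas)
  have rsint : ∀ q t : ℝ, 0 ≤ q → 0 < t →
      Integrable (fun ω => DUIC.rs (h ω) (q * Q ω) (t * Q ω)) μ := by
    intro q t hq ht
    refine Integrable.mono' (integrable_const 1) (rsmeas q t).aestronglyMeasurable ?_
    filter_upwards [hAE] with ω ⟨hnn', hconv', hmono', h0', hD'⟩
    have hQ := hQpos ω
    have h1 : 0 ≤ DUIC.rs (h ω) (q * Q ω) (t * Q ω) :=
      DUIC.rs_nonneg hmono' (mul_nonneg hq hQ.le) (mul_pos ht hQ)
    have h2 : DUIC.rs (h ω) (q * Q ω) (t * Q ω) ≤ 1 :=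
      DUIC.rs_le_one hconv' hmono' (fun r hr => (hD' r hr).2) (mul_nonneg hq hQ.le)
        (mul_pos ht hQ)
    rw [Real.norm_eq_abs, abs_of_nonneg h1]
    exact h2
  have lsint : ∀ q t : ℝ, 0 < t → t ≤ q →
      Integrable (fun ω => DUIC.ls (h ω) (q * Q ω) (t * Q ω)) μ := by
    intro q t ht htq
    refine Integrable.mono' (integrable_const 1) (lsmeas q t).aestronglyMeasurable ?_
    filter_upwards [hAE] with ω ⟨hnn', hconv', hmono', h0', hD'⟩
    have hQ := hQpos ω
    have htQ : t * Q ω ≤ q * Q ω := mul_le_mul_of_nonneg_right htq hQ.le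
    have h1 : 0 ≤ DUIC.ls (h ω) (q * Q ω) (t * Q ω) :=
      DUIC.ls_nonneg hmono' (mul_pos ht hQ) htQ
    have h2 : DUIC.ls (h ω) (q * Q ω) (t * Q ω) ≤ 1 :=
      DUIC.ls_le_one hconv' hmono' (fun r hr => (hD' r hr).2) (mul_pos ht hQ) htQ
    rw [Real.norm_eq_abs, abs_of_nonneg h1]
    exact h2
  -- pointwise limits of slopes
  have tseq : Filter.Tendsto (fun n : ℕ => (1:ℝ) / (n + 1)) Filter.atTop (nhds 0) :=
    tendsto_one_div_add_atTop_nhds_zero_nat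
  have tseqQ : ∀ ω, Filter.Tendsto (fun n : ℕ => (1 / (n + 1) : ℝ) * Q ω) Filter.atTop
      (nhdsWithin 0 (Set.Ioi 0)) := by
    intro ω
    apply tendsto_nhdsWithin_of_tendsto_nhds_of_eventually_within
    · simpa using tseq.mul_const (Q ω)
    · refine Filter.Eventually.of_forall fun n => ?_
      have hQ := hQpos ω
      have h1n : (0:ℝ) < 1 / ((n:ℝ) + 1) := by positivity
      exact Set.mem_Ioi.2 (mul_pos h1n hQ)
  have rs_tendsto : ∀ q : ℝ, 0 ≤ q → ∀ᵐ ω ∂μ,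
      Filter.Tendsto (fun n : ℕ => DUIC.rs (h ω) (q * Q ω) ((1 / (n + 1) : ℝ) * Q ω))
        Filter.atTop (nhds (rightD (h ω) (q * Q ω))) := by
    intro q hq
    filter_upwards [hAE] with ω ⟨hnn', hconv', hmono', h0', hD'⟩
    have hQ := hQpos ω
    exact (DUIC.tendsto_rs hconv' hmono' (mul_nonneg hq hQ.le)).comp (tseqQ ω)
  -- a.e. measurability and integrability of rightD integrand
  have Dmeas : ∀ q : ℝ, 0 ≤ q → AEStronglyMeasurable (fun ω => rightD (h ω) (q * Q ω)) μ := by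
    intro q hq
    have : AEMeasurable (fun ω => rightD (h ω) (q * Q ω)) μ := by
      exact aemeasurable_of_tendsto_metrizable_ae (μ := μ) Filter.atTop
        (f := fun (n : ℕ) ω => DUIC.rs (h ω) (q * Q ω) ((1 / (n + 1) : ℝ) * Q ω))
        (fun n => ((rsmeas q (1 / (n + 1))).aemeasurable)) (rs_tendsto q hq)
    exact this.aestronglyMeasurable
  have Dbound : ∀ q : ℝ, 0 ≤ q → ∀ᵐ ω ∂μ, ‖rightD (h ω) (q * Q ω)‖ ≤ 1 := by
    intro q hq
    filter_upwards [hAE] with ω ⟨hnn', hconv', hmono', h0', hD'⟩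
    have hQ := hQpos ω
    have := hD' (q * Q ω) (mul_nonneg hq hQ.le)
    rw [Real.norm_eq_abs, abs_of_nonneg this.1]
    exact this.2
  have Dint : ∀ q : ℝ, 0 ≤ q → Integrable (fun ω => rightD (h ω) (q * Q ω)) μ := by
    intro q hq
    exact Integrable.mono' (integrable_const 1) (Dmeas q hq) (Dbound q hq)
  -- Part 5 : right derivative
  have part5 : ∀ q : ℝ, 0 ≤ q →
      rightD W q = ∫ ω, rightD (h ω) (q * Q ω) ∂μ := by
    intro q hq
    set I := ∫ ω, rightD (h ω) (q * Q ω) ∂μ with hI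
    have claim1 : ∀ t : ℝ, 0 < t → I ≤ (W (q + t) - W q) / t := by
      intro t ht
      rw [slopeWr q t hq ht]
      apply integral_mono_ae (Dint q hq) (rsint q t hq ht)
      filter_upwards [hAE] with ω ⟨hnn', hconv', hmono', h0', hD'⟩
      have hQ := hQpos ω
      exact DUIC.rightD_le_rs hmono' (mul_nonneg hq hQ.le) (mul_pos ht hQ)
    have hlb : ∀ x ∈ (fun t : ℝ => (W (q + t) - W q) / t) '' Set.Ioi 0, I ≤ x := by
      rintro x ⟨t, (ht : 0 < t), rfl⟩
      exact claim1 t ht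
    have hne : ((fun t : ℝ => (W (q + t) - W q) / t) '' Set.Ioi 0).Nonempty :=
      ⟨_, ⟨1, by norm_num, rfl⟩⟩
    show sInf ((fun t : ℝ => (W (q + t) - W q) / t) '' Set.Ioi 0) = I
    refine le_antisymm ?_ (le_csInf hne hlb)
    have htend : Filter.Tendsto
        (fun n : ℕ => (W (q + 1 / (n + 1)) - W q) / (1 / (n + 1))) Filter.atTop (nhds I) := by
      have heq : ∀ n : ℕ, (W (q + 1 / (n + 1)) - W q) / (1 / (n + 1))
          = ∫ ω, DUIC.rs (h ω) (q * Q ω) ((1 / (n + 1) : ℝ) * Q ω) ∂μ := by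
        intro n
        exact slopeWr q (1 / (n + 1)) hq (by positivity)
      simp only [heq]
      refine tendsto_integral_of_dominated_convergence (fun _ => (1:ℝ))
        (fun n => (rsmeas q (1 / (n + 1))).aestronglyMeasurable) (integrable_const 1)
        (fun n => ?_) (rs_tendsto q hq)
      filter_upwards [hAE] with ω ⟨hnn', hconv', hmono', h0', hD'⟩
      have hQ := hQpos ω
      have h1n : (0:ℝ) < 1 / ((n:ℝ) + 1) := by positivity
      have h1 : 0 ≤ DUIC.rs (h ω) (q * Q ω) ((1 / (n + 1) : ℝ) * Q ω) :=
        DUIC.rs_nonneg hmono' (mul_nonneg hq hQ.le) (mul_pos h1n hQ)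
      have h2 : DUIC.rs (h ω) (q * Q ω) ((1 / (n + 1) : ℝ) * Q ω) ≤ 1 :=
        DUIC.rs_le_one hconv' hmono' (fun r hr => (hD' r hr).2) (mul_nonneg hq hQ.le)
          (mul_pos h1n hQ)
      rw [Real.norm_eq_abs, abs_of_nonneg h1]
      exact h2
    refine ge_of_tendsto htend (Filter.Eventually.of_forall fun n => ?_)
    exact csInf_le ⟨I, hlb⟩ ⟨1 / (n + 1), Set.mem_Ioi.2 (by positivity), rfl⟩
  -- left derivative auxiliary limits
  have ls_tendsto : ∀ q : ℝ, 0 < q → ∀ᵐ ω ∂μ,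
      Filter.Tendsto (fun n : ℕ => DUIC.ls (h ω) (q * Q ω) ((q / (n + 1) : ℝ) * Q ω))
        Filter.atTop (nhds (leftD (h ω) (q * Q ω))) := by
    intro q hq
    filter_upwards [hAE] with ω ⟨hnn', hconv', hmono', h0', hD'⟩
    have hQ := hQpos ω
    have hts : Filter.Tendsto (fun n : ℕ => (q / (n + 1) : ℝ) * Q ω) Filter.atTop
        (nhdsWithin 0 (Set.Ioi 0)) := by
      apply tendsto_nhdsWithin_of_tendsto_nhds_of_eventually_within
      · have : Filter.Tendsto (fun n : ℕ => (q / (n + 1) : ℝ)) Filter.atTop (nhds 0) := by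
          have := tseq.const_mul q
          simpa [div_eq_mul_inv, mul_comm, mul_assoc, one_div] using this
        simpa using this.mul_const (Q ω)
      · refine Filter.Eventually.of_forall fun n => ?_
        have hqn : (0:ℝ) < q / ((n:ℝ) + 1) := div_pos hq (by positivity)
        exact Set.mem_Ioi.2 (mul_pos hqn hQ)
    exact (DUIC.tendsto_ls hconv' hmono' (mul_pos hq hQ)).comp hts
  have Lmeas : ∀ q : ℝ, 0 < q → AEStronglyMeasurable (fun ω => leftD (h ω) (q * Q ω)) μ := by
    intro q hq
    have : AEMeasurable (fun ω => leftD (h ω) (q * Q ω)) μ :=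
      aemeasurable_of_tendsto_metrizable_ae (μ := μ) Filter.atTop
        (f := fun (n : ℕ) ω => DUIC.ls (h ω) (q * Q ω) ((q / (n + 1) : ℝ) * Q ω))
        (fun n => (lsmeas q (q / (n + 1))).aemeasurable) (ls_tendsto q hq)
    exact this.aestronglyMeasurable
  have Lint : ∀ q : ℝ, 0 < q → Integrable (fun ω => leftD (h ω) (q * Q ω)) μ := by
    intro q hq
    refine Integrable.mono' (integrable_const 1) (Lmeas q hq) ?_
    filter_upwards [hAE] with ω ⟨hnn', hconv', hmono', h0', hD'⟩
    have hQ := hQpos ω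
    have hqQ : (0:ℝ) < q * Q ω := mul_pos hq hQ
    have h1 : 0 ≤ leftD (h ω) (q * Q ω) := DUIC.leftD_nonneg hconv' hmono' hqQ
    have h2 : leftD (h ω) (q * Q ω) ≤ 1 :=
      DUIC.leftD_le_one hconv' hmono' (fun r hr => (hD' r hr).2) hqQ
    rw [Real.norm_eq_abs, abs_of_nonneg h1]
    exact h2
  -- Part 6 : left derivative
  have part6 : ∀ q : ℝ, 0 < q →
      leftD W q = ∫ ω, leftD (h ω) (q * Q ω) ∂μ := by
    intro q hq
    set I := ∫ ω, leftD (h ω) (q * Q ω) ∂μ with hI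
    have claim1 : ∀ t : ℝ, 0 < t → t ≤ q → (W q - W (q - t)) / t ≤ I := by
      intro t ht htq
      rw [slopeWl q t ht htq]
      apply integral_mono_ae (lsint q t ht htq) (Lint q hq)
      filter_upwards [hAE] with ω ⟨hnn', hconv', hmono', h0', hD'⟩
      have hQ := hQpos ω
      exact DUIC.ls_le_leftD hconv' hmono' (mul_pos ht hQ)
        (mul_le_mul_of_nonneg_right htq hQ.le)
    have hub : ∀ x ∈ (fun t : ℝ => (W q - W (q - t)) / t) '' Set.Ioc 0 q, x ≤ I := by
      rintro x ⟨t, ht, rfl⟩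
      exact claim1 t ht.1 ht.2
    have hne : ((fun t : ℝ => (W q - W (q - t)) / t) '' Set.Ioc 0 q).Nonempty :=
      ⟨_, ⟨q, ⟨hq, le_rfl⟩, rfl⟩⟩
    show sSup ((fun t : ℝ => (W q - W (q - t)) / t) '' Set.Ioc 0 q) = I
    refine le_antisymm (csSup_le hne hub) ?_
    have htend : Filter.Tendsto
        (fun n : ℕ => (W q - W (q - q / (n + 1))) / (q / (n + 1))) Filter.atTop (nhds I) := by
      have heq : ∀ n : ℕ, (W q - W (q - q / (n + 1))) / (q / (n + 1))
          = ∫ ω, DUIC.ls (h ω) (q * Q ω) ((q / (n + 1) : ℝ) * Q ω) ∂μ := by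
        intro n
        refine slopeWl q (q / (n + 1)) (div_pos hq (by positivity)) ?_
        rw [div_le_iff₀ (by positivity : (0:ℝ) < (n:ℝ) + 1)]
        nlinarith [Nat.cast_nonneg (α := ℝ) n]
      simp only [heq]
      refine tendsto_integral_of_dominated_convergence (fun _ => (1:ℝ))
        (fun n => (lsmeas q (q / (n + 1))).aestronglyMeasurable) (integrable_const 1)
        (fun n => ?_) (ls_tendsto q hq)
      filter_upwards [hAE] with ω ⟨hnn', hconv', hmono', h0', hD'⟩
      have hQ := hQpos ω
      have htq : q / (n + 1) ≤ q := by
        rw [div_le_iff₀ (by positivity : (0:ℝ) < (n:ℝ) + 1)]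
        nlinarith [Nat.cast_nonneg (α := ℝ) n]
      have htQ : (q / (n + 1) : ℝ) * Q ω ≤ q * Q ω := mul_le_mul_of_nonneg_right htq hQ.le
      have hqn : (0:ℝ) < q / ((n:ℝ) + 1) := div_pos hq (by positivity)
      have h1 : 0 ≤ DUIC.ls (h ω) (q * Q ω) ((q / (n + 1) : ℝ) * Q ω) :=
        DUIC.ls_nonneg hmono' (mul_pos hqn hQ) htQ
      have h2 : DUIC.ls (h ω) (q * Q ω) ((q / (n + 1) : ℝ) * Q ω) ≤ 1 :=
        DUIC.ls_le_one hconv' hmono' (fun r hr => (hD' r hr).2) (mul_pos hqn hQ) htQ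
      rw [Real.norm_eq_abs, abs_of_nonneg h1]
      exact h2
    refine le_of_tendsto htend (Filter.Eventually.of_forall fun n => ?_)
    have htq : q / (n + 1) ≤ q := by
      rw [div_le_iff₀ (by positivity : (0:ℝ) < (n:ℝ) + 1)]
      nlinarith [Nat.cast_nonneg (α := ℝ) n]
    exact le_csSup ⟨I, hub⟩ ⟨q / (n + 1), ⟨div_pos hq (by positivity), htq⟩, rfl⟩
  -- Part 7 : limit at infinity
  refine ⟨part1, part2, part3, part4, part5, part6, ?_⟩
  intro hlim
  have hmain : Filter.Tendsto (fun q : ℝ => ∫ ω, rightD (h ω) (q * Q ω) ∂μ)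
      Filter.atTop (nhds 1) := by
    have h1 : (1:ℝ) = ∫ (_ : Ω), (1:ℝ) ∂μ := by simp
    rw [h1]
    refine tendsto_integral_filter_of_dominated_convergence (fun _ => (1:ℝ)) ?_ ?_
      (integrable_const 1) ?_
    · filter_upwards [Filter.eventually_ge_atTop (0:ℝ)] with q hq
      exact Dmeas q hq
    · filter_upwards [Filter.eventually_ge_atTop (0:ℝ)] with q hq
      exact Dbound q hq
    · filter_upwards [hlim, hAE] with ω hl ⟨hnn', hconv', hmono', h0', hD'⟩
      have hQ := hQpos ω
      have : Filter.Tendsto (fun q : ℝ => q * Q ω) Filter.atTop Filter.atTop :=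
        Filter.Tendsto.atTop_mul_const hQ Filter.tendsto_id
      exact hl.comp this
  refine hmain.congr' ?_
  filter_upwards [Filter.eventually_ge_atTop (0:ℝ)] with q hq
  exact (part5 q hq).symm
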